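/- Fix constants b ∈ ℝ, σ ∈ ℝ, μ > 0, β > 0, γ > 0, a continuous function W : [0,∞) → ℝ with W(0) = 0, nondecreasing right-continuous functions N_B, N_E : [0,∞) → ℕ with N_B(0) = N_E(0) = 0 all of whose jumps have size 1, and initial values X₀ ≥ 0, V₀ ∈ ℕ. Suppose (X, V, L) and (X', V', L') are two triples where X, X' : [0,∞) → [0,∞) are continuous, L is a boundary term for X at zero, L' is a boundary term for X' at zero, V, V' : [0,∞) → ℕ, and for all t ≥ 0: X(t) = X₀ + ∫₀ᵗ [b + μV(s)] ds + σW(t) + L(t) and V(t) = V₀ − N_E(γ∫₀ᵗ V(s) ds) + N_B((β/μ)L(t)) (and likewise for the primed triple). Then X = X', V = V', and L = L'; i.e., pathwise uniqueness holds for the nondegenerate-slowdown limit system. -/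

import Mathlib

open MeasureTheory

/-- `L` is a boundary term for `X` at zero: `L(0) = 0`, `L ≥ 0` and nondecreasing
on `[0,∞)`, and the Lebesgue–Stieltjes measure induced by `L` assigns zero mass
to the set `{t ≥ 0 : X(t) > 0}`. -/
def IsBoundaryTerm (X L : ℝ → ℝ) : Prop :=
  L 0 = 0 ∧ (∀ t : ℝ, 0 ≤ t → 0 ≤ L t) ∧ MonotoneOn L (Set.Ici 0) ∧
  ∃ S : StieltjesFunction ℝ, (∀ t : ℝ, 0 ≤ t → S t = L t) ∧
    (∀ t : ℝ, t ≤ 0 → S t = 0) ∧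
    S.measure {t : ℝ | 0 ≤ t ∧ 0 < X t} = 0

/-- A counting path: a nondecreasing, right-continuous, `ℕ`-valued function on
`[0,∞)` starting at `0`, all of whose jumps have size `1`. -/
def IsCountingPath (N : ℝ → ℕ) : Prop :=
  N 0 = 0 ∧ MonotoneOn N (Set.Ici 0) ∧
  (∀ t : ℝ, 0 ≤ t → ∃ ε > (0:ℝ), ∀ u ∈ Set.Ico t (t + ε), N u = N t) ∧
  (∀ t : ℝ, 0 < t → ∃ ε > (0:ℝ), ∀ u ∈ Set.Ioo (t - ε) t, N t ≤ N u + 1)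

lemma nds_vbound {β μ γ : ℝ} (hβμ : 0 ≤ β / μ) {NB NE : ℝ → ℕ}
    (hNBmono : MonotoneOn NB (Set.Ici 0)) {L : ℝ → ℝ}
    (hLnn : ∀ t : ℝ, 0 ≤ t → 0 ≤ L t) (hLmono : MonotoneOn L (Set.Ici 0))
    {V : ℝ → ℕ} {V₀ : ℕ}
    (heqV : ∀ t : ℝ, 0 ≤ t →
      (V t : ℤ) = (V₀ : ℤ) - (NE (γ * ∫ s in (0:ℝ)..t, (V s : ℝ)) : ℤ)
        + (NB ((β / μ) * L t) : ℤ))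
    {T s : ℝ} (hs : 0 ≤ s) (hsT : s ≤ T) :
    (V s : ℝ) ≤ (V₀ : ℝ) + (NB ((β / μ) * L T) : ℝ) := by
  have h := heqV s hs
  have hNEnn : (0:ℤ) ≤ (NE (γ * ∫ u in (0:ℝ)..s, (V u : ℝ)) : ℤ) := Int.natCast_nonneg _
  have h1 : (V s : ℤ) ≤ (V₀ : ℤ) + (NB ((β/μ) * L s) : ℤ) := by omega
  have h2 : NB ((β/μ) * L s) ≤ NB ((β/μ) * L T) :=
    hNBmono (Set.mem_Ici.2 (mul_nonneg hβμ (hLnn s hs)))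
      (Set.mem_Ici.2 (mul_nonneg hβμ (hLnn T (hs.trans hsT))))
      (mul_le_mul_of_nonneg_left (hLmono (Set.mem_Ici.2 hs) (Set.mem_Ici.2 (hs.trans hsT)) hsT) hβμ)
  have h3 : (V s : ℤ) ≤ (V₀ : ℤ) + (NB ((β/μ) * L T) : ℤ) := by
    have := Int.ofNat_le.2 h2; omega
  exact_mod_cast h3

lemma nds_V_integrable {β μ γ : ℝ} (hβμ : 0 ≤ β / μ) {NB NE : ℝ → ℕ}
    (hNE0 : NE 0 = 0) (hNBmono : MonotoneOn NB (Set.Ici 0)) {L : ℝ → ℝ}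
    (hLnn : ∀ t : ℝ, 0 ≤ t → 0 ≤ L t) (hLmono : MonotoneOn L (Set.Ici 0))
    {V : ℝ → ℕ} {V₀ : ℕ}
    (heqV : ∀ t : ℝ, 0 ≤ t →
      (V t : ℤ) = (V₀ : ℤ) - (NE (γ * ∫ s in (0:ℝ)..t, (V s : ℝ)) : ℤ)
        + (NB ((β / μ) * L t) : ℤ)) :
    ∀ t : ℝ, 0 ≤ t → IntervalIntegrable (fun s => (V s : ℝ)) volume 0 t := by
  by_contra hc
  push_neg at hc
  obtain ⟨τ, hτ0, hτ⟩ := hc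
  set Bad : Set ℝ := {t | 0 ≤ t ∧ ¬ IntervalIntegrable (fun s => (V s : ℝ)) volume 0 t} with hBad
  have hne : Bad.Nonempty := ⟨τ, hτ0, hτ⟩
  have hbdd : BddBelow Bad := ⟨0, fun x hx => hx.1⟩
  set T₀ := sInf Bad with hT₀def
  have hT₀0 : 0 ≤ T₀ := le_csInf hne fun x hx => hx.1
  have hup : ∀ t t', t ∈ Bad → t ≤ t' → t' ∈ Bad := by
    intro t t' ht htt'
    refine ⟨ht.1.trans htt', fun hI => ht.2 (hI.mono_set ?_)⟩
    rw [Set.uIcc_of_le ht.1, Set.uIcc_of_le (ht.1.trans htt')]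
    exact Set.Icc_subset_Icc le_rfl htt'
  have hgood : ∀ t, 0 ≤ t → t < T₀ → IntervalIntegrable (fun s => (V s : ℝ)) volume 0 t := by
    intro t ht htT
    by_contra h
    exact absurd (csInf_le hbdd ⟨ht, h⟩) (not_le.2 htT)
  have hmain : IntervalIntegrable (fun s => (V s : ℝ)) volume 0 T₀ := by
    rcases eq_or_lt_of_le hT₀0 with h0 | h0
    · rw [← h0]
    · set u : ℕ → ℝ := fun n => T₀ - T₀ / (n + 1) with hu
      have hu0 : ∀ n : ℕ, 0 ≤ u n := by
        intro n
        have h1 : T₀ / ((n:ℝ)+1) ≤ T₀ := div_le_self h0.le (by linarith [Nat.cast_nonneg (α:=ℝ) n])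
        simp only [hu]; linarith
      have huT : ∀ n : ℕ, u n < T₀ := by
        intro n
        have : (0:ℝ) < T₀ / ((n:ℝ)+1) := by positivity
        simp only [hu]; linarith
      have hcover : Set.Ioo 0 T₀ ⊆ ⋃ n : ℕ, Set.Ioc 0 (u n) := by
        intro x hx
        obtain ⟨n, hn⟩ := exists_nat_ge (T₀ / (T₀ - x))
        refine Set.mem_iUnion.2 ⟨n, hx.1, ?_⟩
        have hx2 : 0 < T₀ - x := sub_pos.2 hx.2
        have hn1 : T₀ / (T₀ - x) ≤ (n:ℝ) + 1 := hn.trans (by linarith)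
        have h2 : T₀ ≤ ((n:ℝ) + 1) * (T₀ - x) := (div_le_iff₀ hx2).1 hn1
        have h3 : T₀ / ((n:ℝ)+1) ≤ T₀ - x := by
          rw [div_le_iff₀ (by positivity)]
          linarith [mul_comm ((n:ℝ)+1) (T₀ - x)]
        simp only [hu]; linarith
      have hmeas : AEMeasurable (fun s => (V s:ℝ)) (volume.restrict (Set.Ioc 0 T₀)) := by
        have h1 : AEMeasurable (fun s => (V s:ℝ)) (volume.restrict (⋃ n : ℕ, Set.Ioc 0 (u n))) := by
          rw [aemeasurable_iUnion_iff]
          intro n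
          exact ((hgood (u n) (hu0 n) (huT n)).1.aestronglyMeasurable.aemeasurable)
        have h2 : AEMeasurable (fun s => (V s:ℝ)) (volume.restrict (Set.Ioo 0 T₀)) :=
          h1.mono_measure (Measure.restrict_mono hcover le_rfl)
        rwa [Measure.restrict_congr_set Ioo_ae_eq_Ioc] at h2
      have hbd : ∀ᵐ s ∂(volume.restrict (Set.Ioc 0 T₀)),
          ‖(V s:ℝ)‖ ≤ (V₀:ℝ) + (NB ((β/μ) * L T₀):ℝ) := by
        rw [ae_restrict_iff' measurableSet_Ioc]
        filter_upwards with s hs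
        rw [Real.norm_of_nonneg (by positivity)]
        exact nds_vbound hβμ hNBmono hLnn hLmono heqV hs.1.le hs.2
      have hInt : IntegrableOn (fun s => (V s:ℝ)) (Set.Ioc 0 T₀) volume :=
        Integrable.mono' (integrableOn_const measure_Ioc_lt_top.ne)
          hmeas.aestronglyMeasurable hbd
      exact (intervalIntegrable_iff_integrableOn_Ioc_of_le hT₀0).2 hInt
  have hT₀Bad : T₀ ∉ Bad := fun h => h.2 hmain
  have hafter : ∀ t, T₀ < t → (V t : ℤ) = (V₀ : ℤ) + (NB ((β/μ) * L t) : ℤ) := by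
    intro t ht
    have htBad : t ∈ Bad := by
      obtain ⟨e, he, helt⟩ := exists_lt_of_csInf_lt hne ht
      exact hup e t he helt.le
    have h0 : (∫ s in (0:ℝ)..t, (V s:ℝ)) = 0 := intervalIntegral.integral_undef htBad.2
    have h1 := heqV t (hT₀0.trans ht.le)
    rw [h0, mul_zero, hNE0] at h1
    simpa using h1
  have hmono2 : MonotoneOn (fun s => (V s:ℝ)) (Set.Ioc T₀ (T₀+1)) := by
    intro x hx y hy hxy
    have hx' := hafter x hx.1
    have hy' := hafter y hy.1
    have hx0 : 0 ≤ x := hT₀0.trans hx.1.le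
    have hy0 : 0 ≤ y := hT₀0.trans hy.1.le
    have hNBle : NB ((β/μ) * L x) ≤ NB ((β/μ) * L y) :=
      hNBmono (Set.mem_Ici.2 (mul_nonneg hβμ (hLnn x hx0)))
        (Set.mem_Ici.2 (mul_nonneg hβμ (hLnn y hy0)))
        (mul_le_mul_of_nonneg_left (hLmono (Set.mem_Ici.2 hx0) (Set.mem_Ici.2 hy0) hxy) hβμ)
    have h3 : (V x : ℤ) ≤ (V y : ℤ) := by
      rw [hx', hy']
      have := Int.ofNat_le.2 hNBle; omega
    show (V x : ℝ) ≤ (V y : ℝ)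
    exact_mod_cast h3
  have hmeas2 : AEMeasurable (fun s => (V s:ℝ)) (volume.restrict (Set.Ioc T₀ (T₀+1))) :=
    aemeasurable_restrict_of_monotoneOn measurableSet_Ioc hmono2
  have hbd2 : ∀ᵐ s ∂(volume.restrict (Set.Ioc T₀ (T₀+1))),
      ‖(V s:ℝ)‖ ≤ (V₀:ℝ) + (NB ((β/μ) * L (T₀+1)):ℝ) := by
    rw [ae_restrict_iff' measurableSet_Ioc]
    filter_upwards with s hs
    rw [Real.norm_of_nonneg (by positivity)]
    exact nds_vbound hβμ hNBmono hLnn hLmono heqV (hT₀0.trans hs.1.le) hs.2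
  have hInt2 : IntegrableOn (fun s => (V s:ℝ)) (Set.Ioc T₀ (T₀+1)) volume :=
    Integrable.mono' (integrableOn_const measure_Ioc_lt_top.ne)
      hmeas2.aestronglyMeasurable hbd2
  have hII2 : IntervalIntegrable (fun s => (V s:ℝ)) volume T₀ (T₀+1) :=
    (intervalIntegrable_iff_integrableOn_Ioc_of_le (by linarith)).2 hInt2
  have hIIfull : IntervalIntegrable (fun s => (V s:ℝ)) volume 0 (T₀+1) := hmain.trans hII2
  obtain ⟨e, he, helt⟩ := exists_lt_of_csInf_lt hne (lt_add_one T₀)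
  exact (hup e (T₀+1) he helt.le).2 hIIfull

lemma nds_skorokhod_le {X L X' L' : ℝ → ℝ}
    (hX : ContinuousOn X (Set.Ici 0)) (hX' : ContinuousOn X' (Set.Ici 0))
    (hXnn' : ∀ t : ℝ, 0 ≤ t → 0 ≤ X' t)
    (hbdry : IsBoundaryTerm X L) (hbdry' : IsBoundaryTerm X' L')
    {τ : ℝ} (hF : ∀ t ∈ Set.Icc (0:ℝ) τ, X t - L t = X' t - L' t) :
    ∀ t ∈ Set.Icc (0:ℝ) τ, X t ≤ X' t := by
  obtain ⟨hL0, hLnn, hLmono, S, hSL, hSneg, hSmeas⟩ := hbdry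
  obtain ⟨hL0', hLnn', hLmono', _⟩ := hbdry'
  intro t ht
  by_contra hlt
  push_neg at hlt
  have hX00 : X 0 = X' 0 := by
    have h := hF 0 ⟨le_rfl, ht.1.trans ht.2⟩
    rw [hL0, hL0'] at h; linarith
  set D := {s | s ∈ Set.Icc (0:ℝ) t ∧ X s ≤ X' s} with hD
  have hDeq : D = Set.Icc 0 t ∩ (fun s => X' s - X s) ⁻¹' (Set.Ici 0) := by
    ext s
    simp only [hD, Set.mem_setOf_eq, Set.mem_inter_iff, Set.mem_preimage, Set.mem_Ici,
      sub_nonneg]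
  have hsub : Set.Icc (0:ℝ) t ⊆ Set.Ici 0 := fun s hs => hs.1
  have hcont : ContinuousOn (fun s => X' s - X s) (Set.Icc 0 t) :=
    (hX'.mono hsub).sub (hX.mono hsub)
  have hclosed : IsClosed D := by
    rw [hDeq]; exact hcont.preimage_isClosed_of_isClosed isClosed_Icc isClosed_Ici
  have hDcomp : IsCompact D :=
    isCompact_Icc.of_isClosed_subset hclosed (by rw [hDeq]; exact Set.inter_subset_left)
  have hDne : D.Nonempty := ⟨0, ⟨le_rfl, ht.1⟩, hX00.le⟩
  set u := sSup D with hu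
  have huD : u ∈ D := hDcomp.sSup_mem hDne
  have hu0 : 0 ≤ u := huD.1.1
  have hut : u ≤ t := huD.1.2
  have hult : u < t := lt_of_le_of_ne hut (fun h => absurd (h ▸ huD.2) (not_le.2 hlt))
  have hbddD : BddAbove D := hDcomp.bddAbove
  have hXpos : ∀ s ∈ Set.Ioc u t, 0 < X s := by
    intro s hs
    have hs0 : 0 ≤ s := hu0.trans hs.1.le
    by_contra hns
    push_neg at hns
    have h1 : X s ≤ X' s := hns.trans (hXnn' s hs0)
    have h2 : s ∈ D := ⟨⟨hs0, hs.2⟩, h1⟩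
    exact absurd (le_csSup hbddD h2) (not_le.2 hs.1)
  have hLtu : L t = L u := by
    have hsub2 : Set.Ioc u t ⊆ {s : ℝ | 0 ≤ s ∧ 0 < X s} :=
      fun s hs => ⟨hu0.trans hs.1.le, hXpos s hs⟩
    have h0 : S.measure (Set.Ioc u t) = 0 :=
      le_antisymm (hSmeas ▸ measure_mono hsub2) (zero_le)
    rw [StieltjesFunction.measure_Ioc, ENNReal.ofReal_eq_zero] at h0
    have h1 : S u ≤ S t := S.mono hult.le
    have h2 : S t = S u := le_antisymm (by linarith) h1
    calc L t = S t := (hSL t (hu0.trans hult.le)).symm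
    _ = S u := h2
    _ = L u := hSL u hu0
  have hFu := hF u ⟨hu0, hut.trans ht.2⟩
  have hFt := hF t ht
  have hL'm : L' u ≤ L' t :=
    hLmono' (Set.mem_Ici.2 hu0) (Set.mem_Ici.2 (hu0.trans hult.le)) hult.le
  linarith [huD.2]

lemma nds_contOn_primitive {f : ℝ → ℝ}
    (h : ∀ t : ℝ, 0 ≤ t → IntervalIntegrable f volume 0 t) :
    ContinuousOn (fun t => ∫ s in (0:ℝ)..t, f s) (Set.Ici 0) := by
  intro t ht
  replace ht : (0:ℝ) ≤ t := ht
  have huIcc : Set.uIcc (0:ℝ) (t+1) = Set.Icc 0 (t+1) := Set.uIcc_of_le (by linarith)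
  have h1 : ContinuousOn (fun x => ∫ s in (0:ℝ)..x, f s) (Set.uIcc 0 (t+1)) :=
    intervalIntegral.continuousOn_primitive_interval' (h (t+1) (by linarith)) Set.left_mem_uIcc
  have h2 : ContinuousWithinAt (fun x => ∫ s in (0:ℝ)..x, f s) (Set.Icc 0 (t+1)) t := by
    have := h1 t (by rw [huIcc]; exact ⟨ht, by linarith⟩)
    rwa [huIcc] at this
  apply h2.mono_of_mem_nhdsWithin
  have hmem : Set.Ici (0:ℝ) ∩ Set.Iio (t+1) ∈ nhdsWithin t (Set.Ici 0) :=
    inter_mem_nhdsWithin _ (Iio_mem_nhds (by linarith))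
  exact Filter.mem_of_superset hmem (fun x hx => ⟨hx.1, hx.2.le⟩)

set_option maxHeartbeats 1000000 in
/-- Pathwise uniqueness for the nondegenerate-slowdown limit system with server
vacations: two solutions `(X, V, L)` and `(X', V', L')` of
`X(t) = X₀ + ∫₀ᵗ [b + μV(s)] ds + σW(t) + L(t)`,
`V(t) = V₀ − N_E(γ∫₀ᵗ V(s) ds) + N_B((β/μ)L(t))`,
with `X, X'` continuous nonnegative, `L, L'` boundary terms at zero and `V, V'`
`ℕ`-valued, coincide. -/
theorem nds_limit_pathwise_uniqueness
    (b σ μ β γ : ℝ) (hμ : 0 < μ) (hβ : 0 < β) (hγ : 0 < γ)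
    (W : ℝ → ℝ) (hW : ContinuousOn W (Set.Ici 0)) (hW0 : W 0 = 0)
    (NB NE : ℝ → ℕ) (hNB : IsCountingPath NB) (hNE : IsCountingPath NE)
    (X₀ : ℝ) (hX₀ : 0 ≤ X₀) (V₀ : ℕ)
    (X L X' L' : ℝ → ℝ) (V V' : ℝ → ℕ)
    (hX : ContinuousOn X (Set.Ici 0)) (hX' : ContinuousOn X' (Set.Ici 0))
    (hXnn : ∀ t : ℝ, 0 ≤ t → 0 ≤ X t) (hXnn' : ∀ t : ℝ, 0 ≤ t → 0 ≤ X' t)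
    (hbdry : IsBoundaryTerm X L) (hbdry' : IsBoundaryTerm X' L')
    (heqX : ∀ t : ℝ, 0 ≤ t →
      X t = X₀ + (∫ s in (0:ℝ)..t, (b + μ * (V s : ℝ))) + σ * W t + L t)
    (heqV : ∀ t : ℝ, 0 ≤ t →
      (V t : ℤ) = (V₀ : ℤ) - (NE (γ * ∫ s in (0:ℝ)..t, (V s : ℝ)) : ℤ)
        + (NB ((β / μ) * L t) : ℤ))
    (heqX' : ∀ t : ℝ, 0 ≤ t →
      X' t = X₀ + (∫ s in (0:ℝ)..t, (b + μ * (V' s : ℝ))) + σ * W t + L' t)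
    (heqV' : ∀ t : ℝ, 0 ≤ t →
      (V' t : ℤ) = (V₀ : ℤ) - (NE (γ * ∫ s in (0:ℝ)..t, (V' s : ℝ)) : ℤ)
        + (NB ((β / μ) * L' t) : ℤ)) :
    ∀ t : ℝ, 0 ≤ t → X t = X' t ∧ V t = V' t ∧ L t = L' t := by
  have hβμpos : (0:ℝ) < β / μ := div_pos hβ hμ
  have hβμ : (0:ℝ) ≤ β / μ := hβμpos.le
  have hLnn := hbdry.2.1
  have hLmono := hbdry.2.2.1
  have hLnn' := hbdry'.2.1
  have hLmono' := hbdry'.2.2.1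
  have hVint := nds_V_integrable hβμ hNE.1 hNB.2.1 hLnn hLmono heqV
  have hVint' := nds_V_integrable hβμ hNE.1 hNB.2.1 hLnn' hLmono' heqV'
  have hIint : ∀ t : ℝ, 0 ≤ t →
      IntervalIntegrable (fun s => b + μ * (V s : ℝ)) volume 0 t :=
    fun t ht => intervalIntegrable_const.add ((hVint t ht).const_mul μ)
  have hIint' : ∀ t : ℝ, 0 ≤ t →
      IntervalIntegrable (fun s => b + μ * (V' s : ℝ)) volume 0 t :=
    fun t ht => intervalIntegrable_const.add ((hVint' t ht).const_mul μ)
  have hLc : ContinuousOn L (Set.Ici 0) := by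
    have hc : ContinuousOn
        (fun t => X t - (X₀ + (∫ s in (0:ℝ)..t, (b + μ * (V s : ℝ))) + σ * W t))
        (Set.Ici 0) :=
      hX.sub ((continuousOn_const.add (nds_contOn_primitive hIint)).add
        (continuousOn_const.mul hW))
    exact ContinuousOn.congr hc (fun t ht => by have := heqX t ht; linarith)
  have hL'c : ContinuousOn L' (Set.Ici 0) := by
    have hc : ContinuousOn
        (fun t => X' t - (X₀ + (∫ s in (0:ℝ)..t, (b + μ * (V' s : ℝ))) + σ * W t))
        (Set.Ici 0) :=
      hX'.sub ((continuousOn_const.add (nds_contOn_primitive hIint')).add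
        (continuousOn_const.mul hW))
    exact ContinuousOn.congr hc (fun t ht => by have := heqX' t ht; linarith)
  by_contra hcon
  push_neg at hcon
  obtain ⟨t₀, ht₀, hbad⟩ := hcon
  have hbad' : ¬(X t₀ = X' t₀ ∧ V t₀ = V' t₀ ∧ L t₀ = L' t₀) :=
    fun h => hbad h.1 h.2.1 h.2.2
  set E : Set ℝ := {t : ℝ | 0 ≤ t ∧ ¬(X t = X' t ∧ V t = V' t ∧ L t = L' t)} with hEdef
  have hEne : E.Nonempty := ⟨t₀, ht₀, hbad'⟩
  have hEbdd : BddBelow E := ⟨0, fun x hx => hx.1⟩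
  set T := sInf E with hTdef
  have hT0 : 0 ≤ T := le_csInf hEne fun x hx => hx.1
  have hpre : ∀ s : ℝ, 0 ≤ s → s < T → X s = X' s ∧ V s = V' s ∧ L s = L' s := by
    intro s hs hsT
    by_contra hc
    exact absurd (csInf_le hEbdd ⟨hs, hc⟩) (not_le.2 hsT)
  have hgT : (∫ s in (0:ℝ)..T, (V s : ℝ)) = ∫ s in (0:ℝ)..T, (V' s : ℝ) := by
    apply intervalIntegral.integral_congr_ae
    rw [Set.uIoc_of_le hT0]
    have hTnull : (volume : Measure ℝ) {T} = 0 := measure_singleton T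
    filter_upwards [compl_mem_ae_iff.2 hTnull] with x hx hmem
    have hxT : x < T := lt_of_le_of_ne hmem.2 (fun h => hx (by simp [h]))
    have hVx := (hpre x hmem.1.le hxT).2.1
    exact_mod_cast hVx
  have hLT : L T = L' T := by
    rcases eq_or_lt_of_le hT0 with h0 | h0
    · rw [← h0, hbdry.1, hbdry'.1]
    · have hIoo : Set.Ioo (0:ℝ) T ⊆ Set.Ici 0 := fun x hx => hx.1.le
      have hne2 : (nhdsWithin T (Set.Ioo 0 T)).NeBot := by
        rw [nhdsWithin_Ioo_eq_nhdsLT h0]; infer_instance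
      have h1 : Filter.Tendsto L (nhdsWithin T (Set.Ioo 0 T)) (nhds (L T)) :=
        (hLc T hT0).mono hIoo
      have h2 : Filter.Tendsto L' (nhdsWithin T (Set.Ioo 0 T)) (nhds (L' T)) :=
        (hL'c T hT0).mono hIoo
      have heqf : L =ᶠ[nhdsWithin T (Set.Ioo 0 T)] L' := by
        filter_upwards [self_mem_nhdsWithin] with x hx
        exact (hpre x hx.1.le hx.2).2.2
      exact tendsto_nhds_unique (h1.congr' heqf) h2
  have hgTnn : 0 ≤ ∫ s in (0:ℝ)..T, (V s : ℝ) :=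
    intervalIntegral.integral_nonneg hT0 (fun u _ => Nat.cast_nonneg _)
  obtain ⟨ε₁, hε₁pos, hε₁⟩ := hNE.2.2.1 (γ * ∫ s in (0:ℝ)..T, (V s : ℝ))
    (mul_nonneg hγ.le hgTnn)
  obtain ⟨ε₂, hε₂pos, hε₂⟩ := hNB.2.2.1 ((β/μ) * L T) (mul_nonneg hβμ (hLnn T hT0))
  have window : ∀ (Vf : ℝ → ℕ) (Lf : ℝ → ℝ),
      (∀ t : ℝ, 0 ≤ t → IntervalIntegrable (fun s => (Vf s : ℝ)) volume 0 t) →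
      (∀ t : ℝ, 0 ≤ t → (Vf t : ℤ) = (V₀ : ℤ)
        - (NE (γ * ∫ s in (0:ℝ)..t, (Vf s : ℝ)) : ℤ) + (NB ((β / μ) * Lf t) : ℤ)) →
      (∀ t : ℝ, 0 ≤ t → 0 ≤ Lf t) → MonotoneOn Lf (Set.Ici 0) →
      ContinuousOn Lf (Set.Ici 0) →
      ((∫ s in (0:ℝ)..T, (Vf s : ℝ)) = ∫ s in (0:ℝ)..T, (V s : ℝ)) → Lf T = L T →
      ∃ δ > (0:ℝ), ∀ t ∈ Set.Icc T (T + δ),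
        (Vf t : ℤ) = (V₀ : ℤ) - (NE (γ * ∫ s in (0:ℝ)..T, (V s : ℝ)) : ℤ)
          + (NB ((β/μ) * L T) : ℤ) := by
    intro Vf Lf hVfint heqVf hLfnn hLfmono hLfc hgTf hLTf
    set Cf := (V₀:ℝ) + (NB ((β/μ) * Lf (T+1)) : ℝ) with hCf
    have hCfnn : 0 ≤ Cf := by positivity
    obtain ⟨δL, hδLpos, hLwin⟩ := Metric.continuousWithinAt_iff.1 (hLfc T hT0)
      ((μ/β) * ε₂) (by positivity)
    obtain ⟨δ, hδpos, hδone, hδLle, hδ2⟩ :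
        ∃ d : ℝ, 0 < d ∧ d ≤ 1 ∧ d ≤ δL/2 ∧ d ≤ ε₁ / (γ * (Cf+1)) := by
      refine ⟨min (min 1 (δL/2)) (ε₁ / (γ * (Cf+1))),
        lt_min (lt_min one_pos (by positivity)) (by positivity),
        (min_le_left _ _).trans (min_le_left _ _),
        (min_le_left _ _).trans (min_le_right _ _), min_le_right _ _⟩
    refine ⟨δ, hδpos, ?_⟩
    intro t ht
    rw [Set.mem_Icc] at ht
    have htT : T ≤ t := ht.1
    have ht0 : 0 ≤ t := hT0.trans htT
    have htd : t - T ≤ δ := by linarith [ht.2]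
    have ht1 : t ≤ T + 1 := by linarith [ht.2]
    have hIITt : IntervalIntegrable (fun s => (Vf s : ℝ)) volume T t := by
      apply (hVfint t ht0).mono_set
      rw [Set.uIcc_of_le ht0, Set.uIcc_of_le htT]
      exact Set.Icc_subset_Icc hT0 le_rfl
    have hadd : (∫ s in (0:ℝ)..t, (Vf s : ℝ))
        = (∫ s in (0:ℝ)..T, (Vf s : ℝ)) + ∫ s in T..t, (Vf s : ℝ) :=
      (intervalIntegral.integral_add_adjacent_intervals (hVfint T hT0) hIITt).symm
    have hnn : 0 ≤ ∫ s in T..t, (Vf s : ℝ) :=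
      intervalIntegral.integral_nonneg htT (fun u _ => Nat.cast_nonneg _)
    have hub : (∫ s in T..t, (Vf s : ℝ)) ≤ Cf * (t - T) := by
      have h1 : (∫ s in T..t, (Vf s : ℝ)) ≤ ∫ _ in T..t, Cf := by
        apply intervalIntegral.integral_mono_on htT hIITt intervalIntegrable_const
        intro s hs
        exact nds_vbound hβμ hNB.2.1 hLfnn hLfmono heqVf (hT0.trans hs.1)
          (hs.2.trans (by linarith))
      rwa [intervalIntegral.integral_const, smul_eq_mul, mul_comm] at h1
    have hNEeq : NE (γ * ∫ s in (0:ℝ)..t, (Vf s : ℝ))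
        = NE (γ * ∫ s in (0:ℝ)..T, (V s : ℝ)) := by
      apply hε₁
      rw [hadd, hgTf]
      have hr : (∫ s in T..t, (Vf s : ℝ)) ≤ Cf * δ :=
        hub.trans (mul_le_mul_of_nonneg_left htd hCfnn)
      have hkey : γ * (Cf * δ) < ε₁ := by
        have h3 : γ * (Cf * δ) ≤ γ * (Cf * (ε₁ / (γ * (Cf+1)))) :=
          mul_le_mul_of_nonneg_left (mul_le_mul_of_nonneg_left hδ2 hCfnn) hγ.le
        have hd : (0:ℝ) < γ * (Cf+1) := by positivity
        have h4 : γ * (Cf * (ε₁ / (γ * (Cf+1)))) < ε₁ := by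
          rw [show γ * (Cf * (ε₁ / (γ * (Cf+1)))) = ε₁ * ((γ * Cf) / (γ * (Cf+1))) by ring]
          have h9 : (γ * Cf) / (γ * (Cf+1)) < 1 := by
            rw [div_lt_one hd]
            have := mul_lt_mul_of_pos_left (lt_add_one Cf) hγ
            linarith
          have h10 := mul_lt_mul_of_pos_left h9 hε₁pos
          linarith
        exact lt_of_le_of_lt h3 h4
      refine Set.mem_Ico.2 ⟨?_, ?_⟩
      · have h12 : γ * (∫ s in (0:ℝ)..T, (V s : ℝ))
            ≤ γ * ((∫ s in (0:ℝ)..T, (V s : ℝ)) + ∫ s in T..t, (Vf s : ℝ)) :=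
          mul_le_mul_of_nonneg_left (le_add_of_nonneg_right hnn) hγ.le
        exact h12
      · have h13 : γ * (∫ s in T..t, (Vf s : ℝ)) ≤ γ * (Cf * δ) :=
          mul_le_mul_of_nonneg_left hr hγ.le
        have h14 : γ * ((∫ s in (0:ℝ)..T, (V s : ℝ)) + ∫ s in T..t, (Vf s : ℝ))
            = γ * (∫ s in (0:ℝ)..T, (V s : ℝ)) + γ * (∫ s in T..t, (Vf s : ℝ)) := by ring
        linarith
    have hNBeq : NB ((β/μ) * Lf t) = NB ((β/μ) * L T) := by
      apply hε₂
      have hlow : (β/μ) * L T ≤ (β/μ) * Lf t := by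
        rw [← hLTf]
        exact mul_le_mul_of_nonneg_left
          (hLfmono (Set.mem_Ici.2 hT0) (Set.mem_Ici.2 ht0) htT) hβμ
      have hup2 : (β/μ) * Lf t < (β/μ) * L T + ε₂ := by
        have hdist : dist t T < δL := by
          rw [Real.dist_eq, abs_of_nonneg (by linarith : (0:ℝ) ≤ t - T)]
          linarith
        have h6 := hLwin (Set.mem_Ici.2 ht0) hdist
        rw [Real.dist_eq] at h6
        have h7 : Lf t - Lf T < (μ/β) * ε₂ := lt_of_le_of_lt (le_abs_self _) h6
        have h8 : (β/μ) * ((μ/β) * ε₂) = ε₂ := by field_simp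
        have h10 := mul_lt_mul_of_pos_left
          (show Lf t < Lf T + (μ/β) * ε₂ by linarith) hβμpos
        have h11 : (β/μ) * (Lf T + (μ/β) * ε₂)
            = (β/μ) * Lf T + (β/μ) * ((μ/β) * ε₂) := by ring
        rw [h11, h8, hLTf] at h10
        exact h10
      exact Set.mem_Ico.2 ⟨hlow, hup2⟩
    rw [heqVf t ht0, hNEeq, hNBeq]
  obtain ⟨δ₁, hδ₁pos, hw⟩ := window V L hVint heqV hLnn hLmono hLc rfl rfl
  obtain ⟨δ₂, hδ₂pos, hw'⟩ := window V' L' hVint' heqV' hLnn' hLmono' hL'c hgT.symm hLT.symm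
  obtain ⟨δ, hδpos, hδle1, hδle2⟩ : ∃ d : ℝ, 0 < d ∧ d ≤ δ₁ ∧ d ≤ δ₂ :=
    ⟨min δ₁ δ₂, lt_min hδ₁pos hδ₂pos, min_le_left _ _, min_le_right _ _⟩
  have hVeq : ∀ s ∈ Set.Icc (0:ℝ) (T+δ), V s = V' s := by
    intro s hs
    rw [Set.mem_Icc] at hs
    rcases lt_or_ge s T with h | h
    · exact (hpre s hs.1 h).2.1
    · have h1 := hw s (Set.mem_Icc.2 ⟨h, hs.2.trans (by linarith)⟩)
      have h2 := hw' s (Set.mem_Icc.2 ⟨h, hs.2.trans (by linarith)⟩)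
      exact_mod_cast h1.trans h2.symm
  have hFeq : ∀ s ∈ Set.Icc (0:ℝ) (T+δ), X s - L s = X' s - L' s := by
    intro s hs
    have hs' := Set.mem_Icc.1 hs
    have hIeq : (∫ u in (0:ℝ)..s, (b + μ * (V u : ℝ)))
        = ∫ u in (0:ℝ)..s, (b + μ * (V' u : ℝ)) := by
      apply intervalIntegral.integral_congr
      intro u hu
      rw [Set.uIcc_of_le hs'.1] at hu
      show b + μ * ((V u : ℕ) : ℝ) = b + μ * ((V' u : ℕ) : ℝ)
      rw [hVeq u (Set.mem_Icc.2 ⟨hu.1, hu.2.trans hs'.2⟩)]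
    have e1 := heqX s hs'.1
    have e2 := heqX' s hs'.1
    rw [hIeq] at e1
    linarith
  have hXle := nds_skorokhod_le hX hX' hXnn' hbdry hbdry' hFeq
  have hXge := nds_skorokhod_le hX' hX hXnn hbdry' hbdry (fun t ht => (hFeq t ht).symm)
  have hfinal : ∀ s ∈ Set.Icc (0:ℝ) (T+δ), X s = X' s ∧ V s = V' s ∧ L s = L' s := by
    intro s hs
    have h1 : X s = X' s := le_antisymm (hXle s hs) (hXge s hs)
    have h2 := hFeq s hs
    exact ⟨h1, hVeq s hs, by linarith⟩
  have hlb : T + δ ≤ sInf E := by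
    apply le_csInf hEne
    intro e he
    by_contra hc2
    push_neg at hc2
    exact he.2 (hfinal e (Set.mem_Icc.2 ⟨he.1, hc2.le⟩))
  rw [← hTdef] at hlb
  linarith
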